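/- arXiv:2010.01285 — 4 statements merged into one kernel-verified Lean document; each statement's English description precedes it below -/
import Mathlib

section
/- Let b > 0, let k be a natural number, and let a, a' : Fin k → ℝ. Then for every z : Fin k → ℝ, ∏_{j} exp(−|z_j − a_j|/b) ≤ exp((∑_{j} |a_j − a'_j|)/b) · ∏_{j} exp(−|z_j − a'_j|/b). In particular, the ratio of the product Laplace densities centered at a and at a' is bounded by exp(‖a − a'‖₁ / b). -/
open Real Finset

/-- The ratio of the product Laplace densities (scale `b > 0`) centered at
`a` and at `a'` is bounded by `exp(‖a − a'‖₁ / b)`: for every `z`,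
`∏ j, exp(−|z_j − a_j|/b) ≤ exp((∑ j, |a_j − a'_j|)/b) · ∏ j, exp(−|z_j − a'_j|/b)`. -/
theorem laplace_density_ratio_bound (b : ℝ) (hb : 0 < b) (k : ℕ)
    (a a' z : Fin k → ℝ) :
    ∏ j, Real.exp (-|z j - a j| / b) ≤
      Real.exp ((∑ j, |a j - a' j|) / b) * ∏ j, Real.exp (-|z j - a' j| / b) := by
  rw [← Real.exp_sum, ← Real.exp_sum, ← Real.exp_add]
  apply Real.exp_le_exp.2
  rw [← Finset.sum_div, ← Finset.sum_div, ← add_div, ← Finset.sum_add_distrib]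
  apply div_le_div_of_nonneg_right _ hb.le
  apply Finset.sum_le_sum
  intro j _
  have := abs_sub_abs_le_abs_sub (z j - a' j) (z j - a j)
  have h2 : |(z j - a' j) - (z j - a j)| = |a j - a' j| := by
    rw [show (z j - a' j) - (z j - a j) = a j - a' j by ring]
  linarith
end

section
/- (Theorem 1, Laplace mechanism.) Let D be a type with an adjacency relation, let f : D → (Fin k → ℝ), and suppose f has ℓ₁-sensitivity at most Δ > 0: for all adjacent x, x' ∈ D, ∑_j |f(x)_j − f(x')_j| ≤ Δ. Let ε > 0 and set b = Δ/ε. Define the mechanism A that on input x outputs f(x) + r, where the coordinates r_1, …, r_k are i.i.d. samples from Lap(b); formally, A(x) is the pushforward of the k-fold product of Lap(b) under the map r ↦ f(x) + r. Then A is ε-differentially private: for all adjacent x, x' ∈ D and all measurable sets S ⊆ (Fin k → ℝ), A(x)(S) ≤ exp(ε) · A(x')(S). -/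
open MeasureTheory Real

/-- The Laplace distribution `Lap(b)` on `ℝ` with scale parameter `b`:
the measure with density `t ↦ (1/(2b))·exp(−|t|/b)` w.r.t. Lebesgue measure. -/
noncomputable def Lap (b : ℝ) : Measure ℝ :=
  (volume : Measure ℝ).withDensity
    fun t => ENNReal.ofReal ((1 / (2 * b)) * Real.exp (-|t| / b))

namespace LapAux

open ENNReal

/-- The real-valued Laplace density. -/
noncomputable def d (b t : ℝ) : ℝ := (1 / (2 * b)) * Real.exp (-|t| / b)

lemma d_nonneg {b : ℝ} (hb : 0 < b) (t : ℝ) : 0 ≤ d b t :=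
  mul_nonneg (by positivity) (Real.exp_nonneg _)

lemma d_meas (b : ℝ) : Measurable (d b) := by
  unfold d
  fun_prop

lemma g_meas (b : ℝ) :
    Measurable (fun t => ENNReal.ofReal (d b t)) := (d_meas b).ennreal_ofReal

lemma Lap_eq (b : ℝ) : Lap b = (volume : Measure ℝ).withDensity
    (fun t => ENNReal.ofReal (d b t)) := rfl

instance (b : ℝ) : SigmaFinite (Lap b) :=
  MeasureTheory.SigmaFinite.withDensity_ofReal _

/-- Tonelli for a product of functions of the coordinates. -/
lemma lintegral_pi_prod {n : ℕ} (μ : Measure ℝ) [SigmaFinite μ] (f : Fin n → ℝ → ℝ≥0∞)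
    (hf : ∀ i, Measurable (f i)) :
    ∫⁻ x : Fin n → ℝ, ∏ i, f i (x i) ∂(Measure.pi fun _ => μ) = ∏ i, ∫⁻ t, f i t ∂μ := by
  induction n with
  | zero => simp
  | succ n ih =>
    have hmp := (measurePreserving_piFinSuccAbove (fun _ : Fin (n + 1) => μ) 0).symm
    have hm : Measurable fun x : Fin (n + 1) → ℝ => ∏ i, f i (x i) :=
      Finset.measurable_prod _ fun i _ => (hf i).comp (measurable_pi_apply i)
    rw [← hmp.lintegral_comp hm]
    simp_rw [MeasurableEquiv.piFinSuccAbove_symm_apply, Fin.insertNthEquiv,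
      Equiv.coe_fn_mk, Fin.prod_univ_succ, Fin.insertNth_zero, Fin.cons_zero, Fin.cons_succ]
    simp only [Fin.zero_succAbove, cast_eq]
    rw [lintegral_prod_mul (f := f 0) (g := fun y : Fin n → ℝ => ∏ x, f x.succ (y x))
      (hf 0).aemeasurable
      (Finset.measurable_prod _ fun i _ =>
        ((hf i.succ).comp (measurable_pi_apply i))).aemeasurable]
    rw [ih (fun i => f i.succ) (fun i => hf i.succ)]

/-- The product of Laplace measures as a density w.r.t. Lebesgue measure. -/
lemma pi_lap_eq (b : ℝ) (k : ℕ) :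
    (Measure.pi fun _ : Fin k => Lap b) =
      (volume : Measure (Fin k → ℝ)).withDensity
        (fun s => ∏ j, ENNReal.ofReal (d b (s j))) := by
  refine Measure.pi_eq fun s hs => ?_
  rw [withDensity_apply _ (MeasurableSet.univ_pi hs), ← lintegral_indicator
    (MeasurableSet.univ_pi hs)]
  have hind : ∀ x : Fin k → ℝ,
      (Set.pi Set.univ s).indicator (fun x => ∏ j, ENNReal.ofReal (d b (x j))) x
        = ∏ j, (s j).indicator (fun t => ENNReal.ofReal (d b t)) (x j) := by
    intro x
    by_cases hx : x ∈ Set.pi Set.univ s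
    · rw [Set.indicator_of_mem hx]
      exact Finset.prod_congr rfl fun j _ =>
        (Set.indicator_of_mem (hx j (Set.mem_univ j)) (fun t => ENNReal.ofReal (d b t))).symm
    · rw [Set.indicator_of_notMem hx]
      rw [Set.mem_univ_pi] at hx
      push_neg at hx
      obtain ⟨j, hj⟩ := hx
      exact (Finset.prod_eq_zero (Finset.mem_univ j)
        (Set.indicator_of_notMem hj _)).symm
  simp_rw [hind]
  rw [volume_pi, lintegral_pi_prod volume _
    (fun i => ((g_meas b).indicator (hs i)))]
  refine Finset.prod_congr rfl fun j _ => ?_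
  rw [Lap_eq, withDensity_apply _ (hs j), lintegral_indicator (hs j)]

/-- The shifted mechanism measure, evaluated on a measurable set. -/
lemma map_add_apply {k : ℕ} (b : ℝ) (c : Fin k → ℝ) {S : Set (Fin k → ℝ)}
    (hS : MeasurableSet S) :
    Measure.map (fun r => c + r) (Measure.pi fun _ : Fin k => Lap b) S
      = ∫⁻ s in S, ∏ j, ENNReal.ofReal (d b (s j - c j)) := by
  have hGm : Measurable fun s : Fin k → ℝ => ∏ j, ENNReal.ofReal (d b (s j - c j)) :=
    Finset.measurable_prod _ fun j _ =>
      (g_meas b).comp ((measurable_pi_apply j).sub measurable_const)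
  rw [pi_lap_eq, Measure.map_apply (measurable_const_add c) hS,
    withDensity_apply _ (hS.preimage (measurable_const_add c))]
  rw [← (measurePreserving_add_left (volume : Measure (Fin k → ℝ)) c).setLIntegral_comp_preimage
    hS hGm]
  refine setLIntegral_congr_fun (hS.preimage (measurable_const_add c)) ?_
  intro a _
  refine Finset.prod_congr rfl fun j _ => ?_
  simp

/-- Pointwise density-ratio bound. -/
lemma density_ratio {k : ℕ} {Δ ε : ℝ} (hΔ : 0 < Δ) (hε : 0 < ε)
    (a a' : Fin k → ℝ) (hsum : ∑ j, (|a' j| - |a j|) ≤ Δ) :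
    ∏ j, ENNReal.ofReal (d (Δ / ε) (a j)) ≤
      ENNReal.ofReal (Real.exp ε) * ∏ j, ENNReal.ofReal (d (Δ / ε) (a' j)) := by
  have hb : 0 < Δ / ε := div_pos hΔ hε
  rw [← ENNReal.ofReal_prod_of_nonneg (fun j _ => d_nonneg hb _),
    ← ENNReal.ofReal_prod_of_nonneg (fun j _ => d_nonneg hb _),
    ← ENNReal.ofReal_mul (Real.exp_nonneg _)]
  refine ENNReal.ofReal_le_ofReal ?_
  set b := Δ / ε with hbdef
  have hprod : ∀ v : Fin k → ℝ, ∏ j, d b (v j)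
      = (1 / (2 * b)) ^ k * Real.exp (∑ j, (-|v j| / b)) := by
    intro v
    rw [Real.exp_sum, show ((1:ℝ) / (2 * b)) ^ k = ∏ _j : Fin k, (1 / (2 * b)) from by simp,
      ← Finset.prod_mul_distrib]
    rfl
  rw [hprod, hprod]
  have hre : Real.exp ε * ((1 / (2 * b)) ^ k * Real.exp (∑ j, (-|a' j| / b)))
      = (1 / (2 * b)) ^ k * Real.exp (ε + ∑ j, (-|a' j| / b)) := by
    rw [Real.exp_add]; ring
  rw [hre]
  refine mul_le_mul_of_nonneg_left (Real.exp_le_exp.2 ?_) (by positivity)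
  have hkey : ∑ j, (-|a j| / b) - ∑ j, (-|a' j| / b) ≤ ε := by
    have : ∑ j, (-|a j| / b) - ∑ j, (-|a' j| / b) = (∑ j, (|a' j| - |a j|)) / b := by
      rw [Finset.sum_div, ← Finset.sum_sub_distrib]
      congr 1
      ext j
      ring
    rw [this]
    calc (∑ j, (|a' j| - |a j|)) / b ≤ Δ / b :=
          div_le_div_of_nonneg_right hsum hb.le
      _ = ε := by rw [hbdef]; field_simp
  linarith

end LapAux

/-- Theorem 1 (Laplace mechanism). If `f : D → (Fin k → ℝ)` has ℓ₁-sensitivity at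
most `Δ > 0` over adjacent inputs, `ε > 0`, and the mechanism `A` outputs
`f(x) + r` with the coordinates of `r` i.i.d. `Lap(Δ/ε)` (i.e. `A x` is the
pushforward of the `k`-fold product of `Lap(Δ/ε)` under `r ↦ f x + r`), then `A`
is `ε`-differentially private: for adjacent `x, x'` and every measurable `S`,
`A x S ≤ exp(ε) · A x' S`. -/
theorem laplace_mechanism_dp {D : Type*} (Adj : D → D → Prop) (k : ℕ)
    (f : D → (Fin k → ℝ)) (Δ ε : ℝ) (hΔ : 0 < Δ) (hε : 0 < ε)
    (hsens : ∀ x x', Adj x x' → ∑ j, |f x j - f x' j| ≤ Δ)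
    (x x' : D) (hadj : Adj x x') (S : Set (Fin k → ℝ)) (hS : MeasurableSet S) :
    Measure.map (fun r => f x + r) (Measure.pi fun _ : Fin k => Lap (Δ / ε)) S ≤
      ENNReal.ofReal (Real.exp ε) *
        Measure.map (fun r => f x' + r) (Measure.pi fun _ : Fin k => Lap (Δ / ε)) S := by
  open LapAux in
  have hm : Measurable fun s : Fin k → ℝ =>
      ∏ j, ENNReal.ofReal (d (Δ / ε) (s j - f x' j)) :=
    Finset.measurable_prod _ fun j _ =>
      ((d_meas _).comp ((measurable_pi_apply j).sub measurable_const)).ennreal_ofReal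
  rw [map_add_apply (Δ / ε) (f x) hS, map_add_apply (Δ / ε) (f x') hS,
    ← lintegral_const_mul _ hm]
  refine lintegral_mono fun s => ?_
  refine density_ratio hΔ hε _ _ ?_
  calc ∑ j, (|s j - f x' j| - |s j - f x j|)
      ≤ ∑ j, |f x j - f x' j| := by
        refine Finset.sum_le_sum fun j _ => ?_
        have := abs_sub_abs_le_abs_sub (s j - f x' j) (s j - f x j)
        have h2 : (s j - f x' j) - (s j - f x j) = f x j - f x' j := by ring
        rwa [h2] at this
    _ ≤ Δ := hsens x x' hadj
end

section
/- (Key mixture inequality underlying Theorem 2.) Let ε ≥ 0, μ ∈ [0,1], and let a, b, p be nonnegative reals satisfying p ≤ exp(ε)·a and p ≤ exp(ε)·b. Then μ·a + (1−μ)·p ≤ ((1−μ)·exp(ε) + μ) · (μ·a + (1−μ)·b). -/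
/-- Key mixture inequality underlying Theorem 2: for `ε ≥ 0`, `μ ∈ [0,1]`, and
nonnegative reals `a, b, p` with `p ≤ exp(ε)·a` and `p ≤ exp(ε)·b`, we have
`μ·a + (1−μ)·p ≤ ((1−μ)·exp(ε) + μ) · (μ·a + (1−μ)·b)`. -/
theorem dropout_mixture_inequality (ε μ a b p : ℝ)
    (hε : 0 ≤ ε) (hμ0 : 0 ≤ μ) (hμ1 : μ ≤ 1)
    (ha : 0 ≤ a) (hb : 0 ≤ b) (hp : 0 ≤ p)
    (hpa : p ≤ Real.exp ε * a) (hpb : p ≤ Real.exp ε * b) :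
    μ * a + (1 - μ) * p ≤ ((1 - μ) * Real.exp ε + μ) * (μ * a + (1 - μ) * b) := by
  have he : 1 ≤ Real.exp ε := Real.one_le_exp hε
  nlinarith [mul_nonneg hμ0 (sub_nonneg.2 hμ1), sq_nonneg (1 - μ),
    mul_nonneg (mul_nonneg hμ0 (sub_nonneg.2 hμ1)) (sub_nonneg.2 he),
    mul_le_mul_of_nonneg_left hpb (mul_nonneg (sub_nonneg.2 hμ1) (sub_nonneg.2 hμ1)),
    mul_le_mul_of_nonneg_left hpa (mul_nonneg hμ0 (sub_nonneg.2 hμ1)),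
    mul_nonneg (mul_nonneg hμ0 (sub_nonneg.2 hμ1)) (mul_nonneg (sub_nonneg.2 he) ha)]
end

section
/- (Theorem 2: word dropout enhances privacy.) Let A be a mechanism mapping each x : Fin d → ℝ to a probability measure A(x) on a measurable space Ω, and suppose A is ε-differentially private with respect to word-level adjacency: for all x, x' : Fin d → ℝ agreeing on all but at most one coordinate and all measurable S ⊆ Ω, A(x)(S) ≤ exp(ε) · A(x')(S), where ε ≥ 0. Let μ ∈ [0,1] and let the random mask I : Fin d → {0,1} have i.i.d. coordinates with P[I_j = 0] = μ and P[I_j = 1] = 1 − μ. Define the dropout mechanism B(x) to be the distribution of A(x ⊙ I) with the mask marginalised out: B(x)(S) = E_I[ A(x ⊙ I)(S) ]. Then B is ε'-differentially private with ε' = ln((1−μ)·exp(ε) + μ): for all adjacent x, x' and all measurable S ⊆ Ω, B(x)(S) ≤ exp(ε') · B(x')(S). -/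
open MeasureTheory ENNReal

/-- The distribution on `Bool` of a single mask bit with dropout rate `μ`:
the bit is `0` (i.e. `false`, word masked) with probability `μ` and `1`
(i.e. `true`, word kept) with probability `1 − μ`. -/
noncomputable def maskBit (μ : ℝ) : Measure Bool :=
  (ENNReal.ofReal μ) • Measure.dirac false + (ENNReal.ofReal (1 - μ)) • Measure.dirac true

/-- The distribution of the random mask `I : Fin d → {0,1}` with i.i.d.
coordinates, each `0` with probability `μ`. -/
noncomputable def maskLaw (d : ℕ) (μ : ℝ) : Measure (Fin d → Bool) :=
  Measure.pi fun _ : Fin d => maskBit μ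

/-- The input `x` masked by `I`: coordinatewise, `(x ⊙ I) j = x j · I j`,
identifying the mask bit with the real numbers `0` and `1`. -/
def maskedInput {d : ℕ} (x : Fin d → ℝ) (I : Fin d → Bool) : Fin d → ℝ :=
  fun j => if I j then x j else 0

instance maskBit_finite (μ : ℝ) : IsFiniteMeasure (maskBit μ) := by
  constructor
  simp only [maskBit, Measure.add_apply, Measure.smul_apply, smul_eq_mul]
  exact ENNReal.add_lt_top.2 ⟨by simp [ENNReal.mul_lt_top, measure_lt_top],
    by simp [ENNReal.mul_lt_top, measure_lt_top]⟩

lemma maskBit_singleton (μ : ℝ) (b : Bool) :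
    maskBit μ {b} = ENNReal.ofReal (if b then 1 - μ else μ) := by
  cases b <;> simp [maskBit, Measure.dirac_apply, Set.indicator]

lemma maskLaw_singleton (d : ℕ) (μ : ℝ) (I : Fin d → Bool) :
    maskLaw d μ {I} = ∏ j, ENNReal.ofReal (if I j then 1 - μ else μ) := by
  have h : ({I} : Set (Fin d → Bool)) = Set.univ.pi fun j => {I j} := by
    ext J; simp [Set.mem_pi, funext_iff]
  rw [maskLaw, h, Measure.pi_pi]
  exact Finset.prod_congr rfl fun j _ => maskBit_singleton μ (I j)

/-- weight split at coordinate `i`. -/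
lemma maskLaw_split (d : ℕ) (μ : ℝ) (i : Fin d) (b : Bool)
    (J : {j : Fin d // j ≠ i} → Bool) :
    maskLaw d μ {(Equiv.funSplitAt i Bool).symm (b, J)} =
      ENNReal.ofReal (if b then 1 - μ else μ) *
        ∏ j : {j : Fin d // j ≠ i}, ENNReal.ofReal (if J j then 1 - μ else μ) := by
  rw [maskLaw_singleton, Fintype.prod_eq_mul_prod_compl i]
  congr 1
  · simp
  · rw [Finset.prod_subtype (p := fun j => j ≠ i) ({i}ᶜ : Finset (Fin d)) (by simp)]
    refine Fintype.prod_congr _ _ fun j => ?_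
    rw [Equiv.funSplitAt_symm_apply]
    simp [j.2]

lemma key_ineq {E μ : ℝ} (hE : 1 ≤ E) (hμ0 : 0 ≤ μ) (hμ1 : μ ≤ 1)
    {a0 a1 a1' : ℝ≥0∞} (ha0 : a0 ≠ ⊤) (ha1 : a1 ≠ ⊤) (ha1' : a1' ≠ ⊤)
    (h1 : a1 ≤ ENNReal.ofReal E * a0) (h2 : a1 ≤ ENNReal.ofReal E * a1') :
    ENNReal.ofReal μ * a0 + ENNReal.ofReal (1 - μ) * a1 ≤
      ENNReal.ofReal ((1 - μ) * E + μ) *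
        (ENNReal.ofReal μ * a0 + ENNReal.ofReal (1 - μ) * a1') := by
  have hE0 : (0:ℝ) < E := by linarith
  have e0 : a0 = ENNReal.ofReal a0.toReal := (ENNReal.ofReal_toReal ha0).symm
  have e1 : a1 = ENNReal.ofReal a1.toReal := (ENNReal.ofReal_toReal ha1).symm
  have e1' : a1' = ENNReal.ofReal a1'.toReal := (ENNReal.ofReal_toReal ha1').symm
  set r0 := a0.toReal with hr0def
  set r1 := a1.toReal with hr1def
  set r1' := a1'.toReal with hr1'def
  have hr0 : 0 ≤ r0 := ENNReal.toReal_nonneg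
  have hr1 : 0 ≤ r1 := ENNReal.toReal_nonneg
  have hr1' : 0 ≤ r1' := ENNReal.toReal_nonneg
  have h1r : r1 ≤ E * r0 := by
    rw [e0, e1, ← ENNReal.ofReal_mul hE0.le] at h1
    exact (ENNReal.ofReal_le_ofReal_iff (by positivity)).mp h1
  have h2r : r1 ≤ E * r1' := by
    rw [e1', e1, ← ENNReal.ofReal_mul hE0.le] at h2
    exact (ENNReal.ofReal_le_ofReal_iff (by positivity)).mp h2
  rw [e0, e1, e1', ← ENNReal.ofReal_mul hμ0, ← ENNReal.ofReal_mul (by linarith),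
    ← ENNReal.ofReal_mul (by linarith),
    ← ENNReal.ofReal_add (mul_nonneg hμ0 hr0) (mul_nonneg (by linarith) hr1),
    ← ENNReal.ofReal_add (mul_nonneg hμ0 hr0) (mul_nonneg (by linarith) hr1'),
    ← ENNReal.ofReal_mul (by nlinarith)]
  apply ENNReal.ofReal_le_ofReal
  nlinarith [mul_nonneg (mul_nonneg (mul_nonneg hμ0 (by linarith : (0:ℝ) ≤ 1 - μ))
      (by linarith : (0:ℝ) ≤ E - 1)) (by linarith : (0:ℝ) ≤ E * r0 - r1),
    mul_nonneg (mul_nonneg (by linarith : (0:ℝ) ≤ 1 - μ)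
      (by nlinarith : (0:ℝ) ≤ (1 - μ) * E + μ)) (by linarith : (0:ℝ) ≤ E * r1' - r1)]

/-- Theorem 2 (word dropout enhances privacy). If the mechanism `A`, mapping
each `x : Fin d → ℝ` to a probability measure on `Ω`, is `ε`-differentially
private w.r.t. word-level adjacency, and the dropout mechanism `B` outputs
`A (x ⊙ I)` with the random mask `I` (i.i.d. coordinates, `P[I_j = 0] = μ`)
marginalised out, i.e. `B x S = E_I [A (x ⊙ I) S]`, then `B` is
`ε'`-differentially private with `ε' = ln((1−μ)·exp(ε) + μ)`. -/
theorem word_dropout_enhances_privacy (d : ℕ) {Ω : Type*} [MeasurableSpace Ω]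
    (A : (Fin d → ℝ) → Measure Ω) (ε μ : ℝ)
    (hε : 0 ≤ ε) (hμ0 : 0 ≤ μ) (hμ1 : μ ≤ 1)
    (hprob : ∀ x, IsProbabilityMeasure (A x))
    (hA : ∀ x x' : Fin d → ℝ, (∃ i, ∀ j, j ≠ i → x j = x' j) →
      ∀ S : Set Ω, MeasurableSet S → A x S ≤ ENNReal.ofReal (Real.exp ε) * A x' S)
    (x x' : Fin d → ℝ) (hadj : ∃ i, ∀ j, j ≠ i → x j = x' j)
    (S : Set Ω) (hS : MeasurableSet S) :
    (∫⁻ I : Fin d → Bool, A (maskedInput x I) S ∂(maskLaw d μ)) ≤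
      ENNReal.ofReal (Real.exp (Real.log ((1 - μ) * Real.exp ε + μ))) *
        ∫⁻ I : Fin d → Bool, A (maskedInput x' I) S ∂(maskLaw d μ) := by
  obtain ⟨i, hxx'⟩ := hadj
  have hE1 : 1 ≤ Real.exp ε := Real.one_le_exp hε
  have hK0 : (0:ℝ) < (1 - μ) * Real.exp ε + μ := by nlinarith
  rw [Real.exp_log hK0]
  set e := Equiv.funSplitAt i Bool with he
  have hsplit : ∀ g : (Fin d → Bool) → ℝ≥0∞, ∑ I, g I =
      ∑ J : {j : Fin d // j ≠ i} → Bool,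
        (g (e.symm (false, J)) + g (e.symm (true, J))) := by
    intro g
    rw [← Equiv.sum_comp e.symm g, Fintype.sum_prod_type, Fintype.sum_bool,
      ← Finset.sum_add_distrib]
    exact Finset.sum_congr rfl fun J _ => add_comm _ _
  rw [lintegral_fintype, lintegral_fintype, hsplit, hsplit, Finset.mul_sum]
  apply Finset.sum_le_sum
  intro J _
  set I0 := e.symm (false, J) with hI0
  set I1 := e.symm (true, J) with hI1
  have hI0i : I0 i = false := by simp [hI0, he, Equiv.funSplitAt_symm_apply]
  have hIoff : ∀ j, j ≠ i → I0 j = I1 j := fun j hj => by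
    simp [hI0, hI1, he, Equiv.funSplitAt_symm_apply, hj]
  have hmask0 : maskedInput x I0 = maskedInput x' I0 := funext fun j => by
    by_cases hj : j = i
    · subst hj; simp [maskedInput, hI0i]
    · simp [maskedInput, hxx' j hj]
  have hadj1 : ∀ j, j ≠ i → maskedInput x I1 j = maskedInput x' I0 j := fun j hj => by
    simp [maskedInput, ← hIoff j hj, hxx' j hj]
  have hadj2 : ∀ j, j ≠ i → maskedInput x I1 j = maskedInput x' I1 j := fun j hj => by
    simp [maskedInput, hxx' j hj]
  have w0 := maskLaw_split d μ i false J
  have w1 := maskLaw_split d μ i true J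
  simp only [if_neg (by simp : ¬ (false = true)), if_pos rfl] at w0 w1
  have hfin : ∀ y : Fin d → ℝ, A y S ≠ ⊤ := fun y => by
    have := hprob y; exact measure_ne_top _ _
  have h1 : A (maskedInput x I1) S ≤
      ENNReal.ofReal (Real.exp ε) * A (maskedInput x' I0) S :=
    hA _ _ ⟨i, hadj1⟩ S hS
  have h2 : A (maskedInput x I1) S ≤
      ENNReal.ofReal (Real.exp ε) * A (maskedInput x' I1) S :=
    hA _ _ ⟨i, hadj2⟩ S hS
  have key := key_ineq hE1 hμ0 hμ1 (hfin (maskedInput x' I0)) (hfin (maskedInput x I1))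
    (hfin (maskedInput x' I1)) h1 h2
  rw [hmask0, w0, w1]
  set W := ∏ j : {j : Fin d // j ≠ i}, ENNReal.ofReal (if J j then 1 - μ else μ) with hW
  set a0 := A (maskedInput x' I0) S
  set a1 := A (maskedInput x I1) S
  set a1' := A (maskedInput x' I1) S
  calc a0 * (ENNReal.ofReal μ * W) + a1 * (ENNReal.ofReal (1 - μ) * W)
      = (ENNReal.ofReal μ * a0 + ENNReal.ofReal (1 - μ) * a1) * W := by ring
    _ ≤ (ENNReal.ofReal ((1 - μ) * Real.exp ε + μ) *
          (ENNReal.ofReal μ * a0 + ENNReal.ofReal (1 - μ) * a1')) * W :=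
        mul_le_mul_left key W
    _ = ENNReal.ofReal ((1 - μ) * Real.exp ε + μ) *
          (a0 * (ENNReal.ofReal μ * W) + a1' * (ENNReal.ofReal (1 - μ) * W)) := by ring
end
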